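/- Let G be a countable group, μ a symmetric probability measure on G, π : G → U(H) a unitary representation, and b, b' 1-cocycles with finite μ-norm. Define ⟨b,b'⟩_μ = Σ_g ⟨b(g), b'(g)⟩ μ(g). Then a cocycle b satisfies Σ_g b(g) μ(g) = 0 (μ-harmonicity) if and only if b is orthogonal to every coboundary g ↦ v − π(g)v (with v ∈ H of finite μ-norm) with respect to ⟨·,·⟩_μ. -/

import Mathlib

open scoped ComplexConjugate


set_option maxHeartbeats 1000000 in
/-- For a symmetric probability measure `μ` on a countable group `G` and a 1-cocycle `b`
of finite `μ`-norm for a unitary representation `π`, the cocycle `b` is `μ`-harmonic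
(`Σ_g μ(g) b(g) = 0`) iff `b` is orthogonal, w.r.t. `⟨b,b'⟩_μ = Σ_g ⟨b(g),b'(g)⟩ μ(g)`,
to every coboundary `g ↦ v − π(g)v` of finite `μ`-norm. -/
theorem stmt_3 {G : Type*} [Group G] [Countable G] {H : Type*} [NormedAddCommGroup H]
    [InnerProductSpace ℂ H] [CompleteSpace H]
    (μ : G → ℝ) (hμ0 : ∀ g, 0 ≤ μ g) (hμ1 : ∑' g, μ g = 1) (hμsym : ∀ g, μ g⁻¹ = μ g)
    (π : G →* (H ≃ₗᵢ[ℂ] H)) (b : G → H)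
    (hb : ∀ g h : G, b (g * h) = b g + π g (b h))
    (hbsum : Summable fun g => μ g • b g)
    (hbnorm : Summable fun g => μ g * ‖b g‖ ^ 2) :
    (∑' g, μ g • b g) = 0 ↔
      ∀ v : H, (Summable fun g => μ g * ‖v - π g v‖ ^ 2) →
        (∑' g, (μ g : ℂ) * (inner ℂ (b g) (v - π g v) : ℂ)) = 0 := by
  have hμs : Summable μ := by
    by_contra h
    rw [tsum_eq_zero_of_not_summable h] at hμ1
    norm_num at hμ1
  -- b 1 = 0
  have hb1 : b 1 = 0 := by
    have h := hb 1 1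
    simp only [mul_one, map_one] at h
    have h2 : b 1 = b 1 + b 1 := by simpa using h
    exact (left_eq_add.mp h2)
  -- b g⁻¹ = - π g⁻¹ (b g)
  have hinv : ∀ g : G, b g⁻¹ = - (π g⁻¹ (b g)) := by
    intro g
    have h := hb g⁻¹ g
    rw [inv_mul_cancel, hb1] at h
    exact eq_neg_of_add_eq_zero_left h.symm
  -- inner ℂ (b g) (π g v) = - inner ℂ (b g⁻¹) v
  have hkey : ∀ (g : G) (v : H), (inner ℂ (b g) ((π g) v) : ℂ) = - inner ℂ (b g⁻¹) v := by
    intro g v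
    have h1 : (inner ℂ ((π g⁻¹) (b g)) ((π g⁻¹) ((π g) v)) : ℂ) = inner ℂ (b g) ((π g) v) :=
      LinearIsometryEquiv.inner_map_map _ _ _
    have h2 : (π g⁻¹) ((π g) v) = v := by
      have : (π g⁻¹ * π g) v = v := by rw [← map_mul, inv_mul_cancel, map_one]; rfl
      exact this
    rw [h2] at h1
    rw [← h1, hinv g, inner_neg_left, neg_neg]
  -- summability of F g := (μ g:ℂ) * ⟪b g, v⟫
  have hFs : ∀ v : H, Summable fun g => (μ g : ℂ) * (inner ℂ (b g) v : ℂ) := by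
    intro v
    have hS : Summable fun g => μ g * ‖b g‖ * ‖v‖ := by
      apply Summable.mul_right
      apply Summable.of_nonneg_of_le (fun g => mul_nonneg (hμ0 g) (norm_nonneg _))
        (fun g => ?_) (((hμs.add hbnorm).div_const 2))
      have h := sq_nonneg (‖b g‖ - 1)
      have h2 : ‖b g‖ ≤ (1 + ‖b g‖ ^ 2) / 2 := by nlinarith
      calc μ g * ‖b g‖ ≤ μ g * ((1 + ‖b g‖ ^ 2) / 2) :=
            mul_le_mul_of_nonneg_left h2 (hμ0 g)
        _ = (μ g + μ g * ‖b g‖ ^ 2) / 2 := by ring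
    apply Summable.of_norm
    apply Summable.of_nonneg_of_le (fun g => norm_nonneg _) (fun g => ?_) hS
    rw [norm_mul]
    have h3 := norm_inner_le_norm (𝕜 := ℂ) (b g) v
    calc ‖(μ g : ℂ)‖ * ‖(inner ℂ (b g) v : ℂ)‖ ≤ ‖(μ g : ℂ)‖ * (‖b g‖ * ‖v‖) :=
          mul_le_mul_of_nonneg_left h3 (norm_nonneg _)
      _ = μ g * ‖b g‖ * ‖v‖ := by
          rw [Complex.norm_real, Real.norm_of_nonneg (hμ0 g)]; ring
  -- tsum F = ⟪∑' μ g • b g, v⟫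
  have hFt : ∀ v : H, (∑' g, (μ g : ℂ) * (inner ℂ (b g) v : ℂ))
      = inner ℂ (∑' g, μ g • b g) v := by
    intro v
    have h1 : ∀ g : G, (inner ℂ v (μ g • b g) : ℂ) = conj ((μ g : ℂ) * inner ℂ (b g) v) := by
      intro g
      rw [map_mul, Complex.conj_ofReal, inner_conj_symm,
        RCLike.real_smul_eq_coe_smul (K := ℂ), inner_smul_right]
      rfl
    have h2 : (inner ℂ v (∑' g, μ g • b g) : ℂ) = ∑' g, (inner ℂ v (μ g • b g) : ℂ) :=
      (innerSL ℂ v).map_tsum hbsum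
    calc (∑' g, (μ g : ℂ) * (inner ℂ (b g) v : ℂ))
        = ∑' g, conj (inner ℂ v (μ g • b g) : ℂ) := by
          refine tsum_congr fun g => ?_
          rw [h1, Complex.conj_conj]
      _ = conj (∑' g, (inner ℂ v (μ g • b g) : ℂ)) := by
          simp only [← Complex.star_def]
          exact tsum_star.symm
      _ = conj (inner ℂ v (∑' g, μ g • b g) : ℂ) := by rw [h2]
      _ = inner ℂ (∑' g, μ g • b g) v := inner_conj_symm _ _
  -- main computation: the pairing equals 2⟪∑, v⟫
  have main : ∀ v : H, (∑' g, (μ g : ℂ) * (inner ℂ (b g) (v - π g v) : ℂ))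
      = 2 * inner ℂ (∑' g, μ g • b g) v := by
    intro v
    have hterm : ∀ g : G, (μ g : ℂ) * (inner ℂ (b g) (v - π g v) : ℂ)
        = (μ g : ℂ) * inner ℂ (b g) v + (μ g⁻¹ : ℂ) * inner ℂ (b g⁻¹) v := by
      intro g
      rw [inner_sub_right, hkey g v, hμsym g]
      ring
    calc (∑' g, (μ g : ℂ) * (inner ℂ (b g) (v - π g v) : ℂ))
        = ∑' g, ((μ g : ℂ) * inner ℂ (b g) v + (μ g⁻¹ : ℂ) * inner ℂ (b g⁻¹) v) :=
          tsum_congr hterm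
      _ = (∑' g, (μ g : ℂ) * inner ℂ (b g) v) + ∑' g, (μ g⁻¹ : ℂ) * inner ℂ (b g⁻¹) v :=
          Summable.tsum_add (hFs v) (((Equiv.inv G).summable_iff).mpr (hFs v))
      _ = (∑' g, (μ g : ℂ) * inner ℂ (b g) v) + ∑' g, (μ g : ℂ) * inner ℂ (b g) v := by
          congr 1
          exact (Equiv.inv G).tsum_eq fun g => (μ g : ℂ) * inner ℂ (b g) v
      _ = 2 * inner ℂ (∑' g, μ g • b g) v := by rw [hFt v]; ring
  constructor
  · intro h0 v _
    rw [main v, h0, inner_zero_left, mul_zero]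
  · intro hv
    set w := ∑' g, μ g • b g with hw
    have hsum : Summable fun g => μ g * ‖w - π g w‖ ^ 2 := by
      apply Summable.of_nonneg_of_le
        (fun g => mul_nonneg (hμ0 g) (sq_nonneg _))
        (fun g => ?_) (hμs.mul_right (4 * ‖w‖ ^ 2))
      have h1 : ‖w - π g w‖ ≤ 2 * ‖w‖ := by
        calc ‖w - π g w‖ ≤ ‖w‖ + ‖π g w‖ := norm_sub_le _ _
          _ = 2 * ‖w‖ := by rw [(π g).norm_map]; ring
      have h2 : ‖w - π g w‖ ^ 2 ≤ 4 * ‖w‖ ^ 2 := by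
        nlinarith [norm_nonneg (w - π g w), norm_nonneg w]
      exact mul_le_mul_of_nonneg_left h2 (hμ0 g)
    have h4 := hv w hsum
    rw [main w] at h4
    have h3 : (inner ℂ w w : ℂ) = 0 := by
      have : (2 : ℂ) ≠ 0 := two_ne_zero
      exact (mul_eq_zero.mp h4).resolve_left this
    rwa [inner_self_eq_zero] at h3
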